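/- arXiv:2604.05230 — 2 statements merged into one kernel-verified Lean document; each statement's English description precedes it below -/
import Mathlib

section
/- Let H be a symmetric positive definite n×n real matrix with inverse B = H⁻¹, and let s, y ∈ ℝ^n with yᵀs > 0, s ≠ 0, y ≠ 0. Let τ ≠ 0 and φ be real scalars, set a := (yᵀHy)(sᵀBs)/(yᵀs)² − 1 and assume 1 + aφ ≠ 0, and define η := (1−φ)/(1+aφ). Define v := (yᵀHy)^{1/2}( s/(yᵀs) − Hy/(yᵀHy) ), w := (sᵀBs)^{1/2}( y/(yᵀs) − Bs/(sᵀBs) ), H⁺ := (1/τ)[ H − (H y yᵀ H)/(yᵀ H y) + φ v vᵀ ] + (s sᵀ)/(yᵀ s), and B⁺ := τ[ B − (B s sᵀ B)/(sᵀ B s) + η w wᵀ ] + (y yᵀ)/(yᵀ s). Then B⁺ H⁺ = I, i.e., B⁺ is the inverse of the self-scaled Broyden update H⁺. -/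
open Matrix

set_option maxHeartbeats 4000000

namespace SSBAux

variable {n : ℕ}


lemma vmv_mul_vmv (a b c d : Fin n → ℝ) :
    vecMulVec a b * vecMulVec c d = (b ⬝ᵥ c) • vecMulVec a d := by
  ext i j
  simp only [Matrix.mul_apply, vecMulVec_apply, Matrix.smul_apply, smul_eq_mul,
    dotProduct, Finset.sum_mul]
  exact Finset.sum_congr rfl fun k _ => by ring

lemma mul_vmv (M : Matrix (Fin n) (Fin n) ℝ) (a b : Fin n → ℝ) :
    M * vecMulVec a b = vecMulVec (M *ᵥ a) b := by
  ext i j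
  simp only [Matrix.mul_apply, vecMulVec_apply, mulVec, dotProduct, Finset.sum_mul]
  exact Finset.sum_congr rfl fun k _ => by ring

lemma vmv_mul (a b : Fin n → ℝ) (M : Matrix (Fin n) (Fin n) ℝ) :
    vecMulVec a b * M = vecMulVec a (b ᵥ* M) := by
  ext i j
  simp only [Matrix.mul_apply, vecMulVec_apply, vecMul, dotProduct, Finset.mul_sum]
  exact Finset.sum_congr rfl fun k _ => by ring

lemma vmv_mulVec (a b c : Fin n → ℝ) : vecMulVec a b *ᵥ c = (b ⬝ᵥ c) • a := by
  ext i
  simp only [mulVec, vecMulVec_apply, dotProduct, Pi.smul_apply, smul_eq_mul, Finset.mul_sum]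
  rw [Finset.sum_mul]
  exact Finset.sum_congr rfl fun k _ => by ring

lemma smul_vmv_left (r : ℝ) (a b : Fin n → ℝ) :
    vecMulVec (r • a) b = r • vecMulVec a b := by
  ext i j
  simp only [vecMulVec_apply, Pi.smul_apply, smul_eq_mul, Matrix.smul_apply]
  ring


end SSBAux

open SSBAux

/-- The self-scaled Broyden updates of the inverse-Hessian approximation `H`
and the Hessian approximation `B = H⁻¹` are mutually inverse: with
`a = (yᵀHy)(sᵀBs)/(yᵀs)² − 1`, `η = (1−φ)/(1+aφ)`,
`v = (yᵀHy)^{1/2}(s/(yᵀs) − Hy/(yᵀHy))`, `w = (sᵀBs)^{1/2}(y/(yᵀs) − Bs/(sᵀBs))`,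
`H⁺ = (1/τ)[H − (HyyᵀH)/(yᵀHy) + φvvᵀ] + ssᵀ/(yᵀs)` and
`B⁺ = τ[B − (BssᵀB)/(sᵀBs) + ηwwᵀ] + yyᵀ/(yᵀs)`, one has `B⁺H⁺ = I`. -/
theorem stmt_4 (n : ℕ) (H B : Matrix (Fin n) (Fin n) ℝ)
    (hH : H.PosDef) (hB : B = H⁻¹)
    (s y : Fin n → ℝ) (hys : 0 < y ⬝ᵥ s) (hs : s ≠ 0) (hy : y ≠ 0)
    (τ φ : ℝ) (hτ : τ ≠ 0)
    (a : ℝ) (ha : a = (y ⬝ᵥ H.mulVec y) * (s ⬝ᵥ B.mulVec s) / (y ⬝ᵥ s) ^ 2 - 1)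
    (haφ : 1 + a * φ ≠ 0)
    (η : ℝ) (hη : η = (1 - φ) / (1 + a * φ))
    (v : Fin n → ℝ)
    (hv : v = Real.sqrt (y ⬝ᵥ H.mulVec y) •
      ((y ⬝ᵥ s)⁻¹ • s - (y ⬝ᵥ H.mulVec y)⁻¹ • H.mulVec y))
    (w : Fin n → ℝ)
    (hw : w = Real.sqrt (s ⬝ᵥ B.mulVec s) •
      ((y ⬝ᵥ s)⁻¹ • y - (s ⬝ᵥ B.mulVec s)⁻¹ • B.mulVec s))
    (Hplus : Matrix (Fin n) (Fin n) ℝ)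
    (hHplus : Hplus = τ⁻¹ •
        (H - (y ⬝ᵥ H.mulVec y)⁻¹ • vecMulVec (H.mulVec y) (vecMul y H)
          + φ • vecMulVec v v)
      + (y ⬝ᵥ s)⁻¹ • vecMulVec s s)
    (Bplus : Matrix (Fin n) (Fin n) ℝ)
    (hBplus : Bplus = τ •
        (B - (s ⬝ᵥ B.mulVec s)⁻¹ • vecMulVec (B.mulVec s) (vecMul s B)
          + η • vecMulVec w w)
      + (y ⬝ᵥ s)⁻¹ • vecMulVec y y) :
    Bplus * Hplus = 1 := by
  have hHsym : Hᵀ = H := by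
    have h1 := hH.1
    rwa [Matrix.IsHermitian, conjTranspose_eq_transpose_of_trivial] at h1
  have hdet : IsUnit H.det := isUnit_iff_ne_zero.mpr hH.det_pos.ne'
  have hBH : B * H = 1 := by rw [hB]; exact Matrix.nonsing_inv_mul H hdet
  have hHB : H * B = 1 := by rw [hB]; exact Matrix.mul_nonsing_inv H hdet
  have hBsym : Bᵀ = B := by rw [hB, Matrix.transpose_nonsing_inv, hHsym]
  have hvH : ∀ u : Fin n → ℝ, u ᵥ* H = H *ᵥ u := by
    intro u; conv_lhs => rw [← hHsym]
    rw [Matrix.vecMul_transpose]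
  have hvB : ∀ u : Fin n → ℝ, u ᵥ* B = B *ᵥ u := by
    intro u; conv_lhs => rw [← hBsym]
    rw [Matrix.vecMul_transpose]
  have hBp : B *ᵥ (H *ᵥ y) = y := by
    rw [Matrix.mulVec_mulVec, hBH, Matrix.one_mulVec]
  have hHq : H *ᵥ (B *ᵥ s) = s := by
    rw [Matrix.mulVec_mulVec, hHB, Matrix.one_mulVec]
  -- positivity
  have hα : 0 < y ⬝ᵥ H *ᵥ y := by
    have := hH.re_dotProduct_pos hy; simpa using this
  have hβ : 0 < s ⬝ᵥ B *ᵥ s := by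
    have hBpd : B.PosDef := hB ▸ hH.inv
    have := hBpd.re_dotProduct_pos hs; simpa using this
  -- dot product facts
  have dqs : (B *ᵥ s) ⬝ᵥ s = s ⬝ᵥ B *ᵥ s := dotProduct_comm _ _
  have dqp : (B *ᵥ s) ⬝ᵥ (H *ᵥ y) = y ⬝ᵥ s := by
    rw [dotProduct_comm, dotProduct_mulVec, hvB, hBp]
  have hsqα : Real.sqrt (y ⬝ᵥ H *ᵥ y) * Real.sqrt (y ⬝ᵥ H *ᵥ y) = y ⬝ᵥ H *ᵥ y :=
    Real.mul_self_sqrt hα.le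
  have hsqβ : Real.sqrt (s ⬝ᵥ B *ᵥ s) * Real.sqrt (s ⬝ᵥ B *ᵥ s) = s ⬝ᵥ B *ᵥ s :=
    Real.mul_self_sqrt hβ.le
  have hvv : vecMulVec v v =
      ((y ⬝ᵥ H *ᵥ y) * ((y ⬝ᵥ s)⁻¹ * (y ⬝ᵥ s)⁻¹)) • vecMulVec s s
      - ((y ⬝ᵥ H *ᵥ y) * ((y ⬝ᵥ s)⁻¹ * (y ⬝ᵥ H *ᵥ y)⁻¹)) • vecMulVec s (H *ᵥ y)
      - ((y ⬝ᵥ H *ᵥ y) * ((y ⬝ᵥ s)⁻¹ * (y ⬝ᵥ H *ᵥ y)⁻¹)) • vecMulVec (H *ᵥ y) s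
      + ((y ⬝ᵥ H *ᵥ y) * ((y ⬝ᵥ H *ᵥ y)⁻¹ * (y ⬝ᵥ H *ᵥ y)⁻¹)) • vecMulVec (H *ᵥ y) (H *ᵥ y) := by
    rw [hv]
    ext i j
    simp only [vecMulVec_apply, Pi.smul_apply, Pi.sub_apply, smul_eq_mul,
      Matrix.sub_apply, Matrix.add_apply, Matrix.smul_apply]
    linear_combination (((y ⬝ᵥ s)⁻¹ * s i - (y ⬝ᵥ H *ᵥ y)⁻¹ * (H *ᵥ y) i) *
      ((y ⬝ᵥ s)⁻¹ * s j - (y ⬝ᵥ H *ᵥ y)⁻¹ * (H *ᵥ y) j)) * hsqα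
  have hww : vecMulVec w w =
      ((s ⬝ᵥ B *ᵥ s) * ((y ⬝ᵥ s)⁻¹ * (y ⬝ᵥ s)⁻¹)) • vecMulVec y y
      - ((s ⬝ᵥ B *ᵥ s) * ((y ⬝ᵥ s)⁻¹ * (s ⬝ᵥ B *ᵥ s)⁻¹)) • vecMulVec y (B *ᵥ s)
      - ((s ⬝ᵥ B *ᵥ s) * ((y ⬝ᵥ s)⁻¹ * (s ⬝ᵥ B *ᵥ s)⁻¹)) • vecMulVec (B *ᵥ s) y
      + ((s ⬝ᵥ B *ᵥ s) * ((s ⬝ᵥ B *ᵥ s)⁻¹ * (s ⬝ᵥ B *ᵥ s)⁻¹)) • vecMulVec (B *ᵥ s) (B *ᵥ s) := by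
    rw [hw]
    ext i j
    simp only [vecMulVec_apply, Pi.smul_apply, Pi.sub_apply, smul_eq_mul,
      Matrix.sub_apply, Matrix.add_apply, Matrix.smul_apply]
    linear_combination (((y ⬝ᵥ s)⁻¹ * y i - (s ⬝ᵥ B *ᵥ s)⁻¹ * (B *ᵥ s) i) *
      ((y ⬝ᵥ s)⁻¹ * y j - (s ⬝ᵥ B *ᵥ s)⁻¹ * (B *ᵥ s) j)) * hsqβ
  have hσ0 : (y ⬝ᵥ s) ≠ 0 := hys.ne'
  have hα0 : (y ⬝ᵥ H *ᵥ y) ≠ 0 := hα.ne'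
  have hβ0 : (s ⬝ᵥ B *ᵥ s) ≠ 0 := hβ.ne'
  have hβeq : s ⬝ᵥ B *ᵥ s = (1 + a) * (y ⬝ᵥ s) ^ 2 / (y ⬝ᵥ H *ᵥ y) := by
    rw [ha]; field_simp; ring
  have h1a : (1:ℝ) + a ≠ 0 := by
    have h := div_pos (mul_pos hα hβ) (pow_pos hys 2)
    rw [ha]; intro hc; apply h.ne'; linarith
  rw [hBplus, hHplus, hvv, hww, hvH y, hvB s]
  simp only [Matrix.add_mul, Matrix.mul_add, Matrix.sub_mul, Matrix.mul_sub,
    Matrix.smul_mul, Matrix.mul_smul, mul_vmv, vmv_mul, vmv_mul_vmv, vmv_mulVec, smul_vmv_left,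
    hBH, hBp, hHq, hvH, hvB, smul_add, smul_sub, smul_smul, dqs, dqp]
  match_scalars
  all_goals try simp only [hη, hβeq]
  all_goals field_simp [hσ0, hα0, hβ0, hτ, haφ, h1a, (by rwa [mul_comm] at haφ : (1:ℝ) + φ * a ≠ 0)]
  all_goals try ring
end

section
/- Let H be a symmetric positive definite n×n real matrix, let s, y ∈ ℝ^n with yᵀs > 0 and y ≠ 0, let τ > 0, and let φ ∈ [0,1]. Define v := (yᵀHy)^{1/2}( s/(yᵀs) − Hy/(yᵀHy) ) and H⁺ := (1/τ)[ H − (H y yᵀ H)/(yᵀ H y) + φ v vᵀ ] + (s sᵀ)/(yᵀ s). Then H⁺ is symmetric and positive definite. -/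
open Matrix

private lemma vecMulVec_mulVec' {n : ℕ} (u w x : Fin n → ℝ) :
    (vecMulVec u w) *ᵥ x = (w ⬝ᵥ x) • u := by
  funext i
  simp only [mulVec, vecMulVec_apply, dotProduct, Pi.smul_apply, smul_eq_mul,
    Finset.mul_sum, mul_comm, mul_left_comm]

private lemma quad_vecMulVec {n : ℕ} (u w x : Fin n → ℝ) :
    x ⬝ᵥ (vecMulVec u w) *ᵥ x = (w ⬝ᵥ x) * (x ⬝ᵥ u) := by
  rw [vecMulVec_mulVec', dotProduct_smul, smul_eq_mul]

private lemma transpose_vecMulVec' {n : ℕ} (u w : Fin n → ℝ) :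
    (vecMulVec u w)ᵀ = vecMulVec w u := by
  ext i j
  simp [vecMulVec_apply, mul_comm]

/-- If `H` is symmetric positive definite, `yᵀs > 0`, `y ≠ 0`, `τ > 0` and
`φ ∈ [0,1]`, then the self-scaled Broyden update
`H⁺ = (1/τ)[H − (HyyᵀH)/(yᵀHy) + φvvᵀ] + ssᵀ/(yᵀs)` is symmetric positive definite. -/
theorem stmt_5 (n : ℕ) (H : Matrix (Fin n) (Fin n) ℝ) (hH : H.PosDef)
    (s y : Fin n → ℝ) (hys : 0 < y ⬝ᵥ s) (hy : y ≠ 0)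
    (τ : ℝ) (hτ : 0 < τ) (φ : ℝ) (hφ0 : 0 ≤ φ) (hφ1 : φ ≤ 1)
    (v : Fin n → ℝ)
    (hv : v = Real.sqrt (y ⬝ᵥ H.mulVec y) •
      ((y ⬝ᵥ s)⁻¹ • s - (y ⬝ᵥ H.mulVec y)⁻¹ • H.mulVec y))
    (Hplus : Matrix (Fin n) (Fin n) ℝ)
    (hHplus : Hplus = τ⁻¹ •
        (H - (y ⬝ᵥ H.mulVec y)⁻¹ • vecMulVec (H.mulVec y) (vecMul y H)
          + φ • vecMulVec v v)
      + (y ⬝ᵥ s)⁻¹ • vecMulVec s s) :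
    Hplus.IsSymm ∧ Hplus.PosDef := by
  have hsym : Hᵀ = H := by
    have := hH.isHermitian
    rwa [Matrix.IsHermitian, conjTranspose_eq_transpose_of_trivial] at this
  have hvecMul : y ᵥ* H = H *ᵥ y := by
    rw [← mulVec_transpose, hsym]
  -- abbreviation
  set a : ℝ := y ⬝ᵥ H *ᵥ y with ha_def
  have ha : 0 < a := by
    have := hH.dotProduct_mulVec_pos hy
    simpa using this
  -- symmetry of the inner products
  have hdotsymm : ∀ x z : Fin n → ℝ, x ⬝ᵥ H *ᵥ z = z ⬝ᵥ H *ᵥ x := by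
    intro x z
    rw [dotProduct_mulVec, ← mulVec_transpose, hsym, dotProduct_comm]
  -- symmetry of Hplus
  have hHsymm : Hplus.IsSymm := by
    rw [Matrix.IsSymm, hHplus, hvecMul]
    simp only [transpose_add, transpose_smul, transpose_sub, transpose_vecMulVec', hsym]
  refine ⟨hHsymm, ?_⟩
  rw [posDef_iff_dotProduct_mulVec]
  constructor
  · rw [Matrix.IsHermitian, conjTranspose_eq_transpose_of_trivial]
    exact hHsymm
  intro x hx
  have hstar : star x = x := by simp
  rw [hstar]
  -- expand the quadratic form
  set b : ℝ := x ⬝ᵥ H *ᵥ y with hb_def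
  have hquad : x ⬝ᵥ Hplus *ᵥ x
      = τ⁻¹ * ((x ⬝ᵥ H *ᵥ x - b ^ 2 / a) + φ * (v ⬝ᵥ x) ^ 2)
        + (y ⬝ᵥ s)⁻¹ * (s ⬝ᵥ x) ^ 2 := by
    rw [hHplus, hvecMul]
    simp only [add_mulVec, sub_mulVec, smul_mulVec, dotProduct_add, dotProduct_sub,
      dotProduct_smul, quad_vecMulVec, smul_eq_mul]
    have h1 : x ⬝ᵥ H *ᵥ y = b := rfl
    have h2 : (H *ᵥ y) ⬝ᵥ x = b := by rw [dotProduct_comm]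
    have h3 : x ⬝ᵥ v = v ⬝ᵥ x := dotProduct_comm _ _
    have h4 : x ⬝ᵥ s = s ⬝ᵥ x := dotProduct_comm _ _
    rw [h2, h3, h4]
    field_simp
    rw [← hb_def]
    ring
  rw [hquad]
  -- Cauchy-Schwarz part: x ⬝ᵥ H x - b²/a = z ⬝ᵥ H z with z = x - (b/a) • y
  set z : Fin n → ℝ := x - (b / a) • y with hz_def
  have hzz : z ⬝ᵥ H *ᵥ z = x ⬝ᵥ H *ᵥ x - b ^ 2 / a := by
    have hyx : y ⬝ᵥ H *ᵥ x = b := by rw [hdotsymm]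
    rw [hz_def]
    simp only [mulVec_sub, mulVec_smul, dotProduct_sub, sub_dotProduct, smul_dotProduct,
      dotProduct_smul, smul_eq_mul, ← hb_def, hyx, ← ha_def]
    field_simp
    ring
  have hz_nonneg : 0 ≤ z ⬝ᵥ H *ᵥ z := by
    have := hH.posSemidef.dotProduct_mulVec_nonneg z
    simpa using this
  have hφv : 0 ≤ φ * (v ⬝ᵥ x) ^ 2 := mul_nonneg hφ0 (sq_nonneg _)
  have hs_nonneg : 0 ≤ (y ⬝ᵥ s)⁻¹ * (s ⬝ᵥ x) ^ 2 :=
    mul_nonneg (le_of_lt (inv_pos.mpr hys)) (sq_nonneg _)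
  rw [← hzz]
  by_cases hzzero : z = 0
  · -- x = (b/a) • y, and b/a ≠ 0 since x ≠ 0; then s ⬝ᵥ x ≠ 0
    have hxy : x = (b / a) • y := by
      have := hzzero
      rw [hz_def, sub_eq_zero] at this
      exact this
    have hba : b / a ≠ 0 := by
      intro h
      apply hx
      rw [hxy, h, zero_smul]
    have hsx : s ⬝ᵥ x ≠ 0 := by
      rw [hxy, dotProduct_smul, smul_eq_mul]
      have : s ⬝ᵥ y ≠ 0 := by
        rw [dotProduct_comm]; exact ne_of_gt hys
      exact mul_ne_zero hba this
    have hfirst : 0 ≤ τ⁻¹ * (z ⬝ᵥ H *ᵥ z + φ * (v ⬝ᵥ x) ^ 2) :=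
      mul_nonneg (le_of_lt (inv_pos.mpr hτ)) (add_nonneg hz_nonneg hφv)
    have hpos' : 0 < (y ⬝ᵥ s)⁻¹ * (s ⬝ᵥ x) ^ 2 :=
      mul_pos (inv_pos.mpr hys) (by positivity)
    linarith
  · have hzpos : 0 < z ⬝ᵥ H *ᵥ z := by
      have := hH.dotProduct_mulVec_pos hzzero
      simpa using this
    have hfirst : 0 < τ⁻¹ * (z ⬝ᵥ H *ᵥ z + φ * (v ⬝ᵥ x) ^ 2) :=
      mul_pos (inv_pos.mpr hτ) (by linarith)
    linarith
end
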